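/- For the Euler-kernel approximation problem under the absolute error criterion, the problem is strongly polynomially tractable for every nondecreasing sequence (r_k) of nonnegative integers, and the exponent of SPT equals max{ξ_0/(r̄+1), 1/(r_1+1)}, where r̄ := lim_{k→∞} r_k ∈ [0,∞] (with ξ_0/(r̄+1) := 0 when r̄ = ∞) and ξ_0 is the unique number in (1,2) satisfying ∑_{j=1}^∞ (π(j-1/2))^{-ξ_0} = 1. -/

import Mathlib

open Filter Real Set

/-- Information complexity: the number of multi-indices `(j₁,…,j_d) ∈ ℕ^d`
(here 0-indexed, so `Λ k j` stands for `λ(k+1, j+1)`) whose eigenvalue product exceeds `ε²`. -/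
noncomputable def infoCount (Λ : ℕ → ℕ → ℝ) (d : ℕ) (ε : ℝ) : ℕ :=
  Nat.card {j : Fin d → ℕ | ε ^ 2 < ∏ k : Fin d, Λ k.val (j k)}

/-- Strong polynomial tractability. -/
def IsSPT (Λ : ℕ → ℕ → ℝ) : Prop :=
  ∃ C p : ℝ, 0 ≤ C ∧ 0 ≤ p ∧ ∀ d : ℕ, 1 ≤ d → ∀ ε : ℝ, ε ∈ Set.Ioo (0 : ℝ) 1 →
    (infoCount Λ d ε : ℝ) ≤ C * ε ^ (-p)

/-- The exponent `p*` of strong polynomial tractability. -/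
noncomputable def sptExponent (Λ : ℕ → ℕ → ℝ) : ℝ :=
  sInf {p : ℝ | 0 ≤ p ∧ ∃ C : ℝ, 0 ≤ C ∧ ∀ d : ℕ, 1 ≤ d → ∀ ε : ℝ, ε ∈ Set.Ioo (0 : ℝ) 1 →
    (infoCount Λ d ε : ℝ) ≤ C * ε ^ (-p)}

/-- Polynomial tractability. -/
def IsPT (Λ : ℕ → ℕ → ℝ) : Prop :=
  ∃ C p q : ℝ, 0 ≤ C ∧ 0 ≤ p ∧ 0 ≤ q ∧ ∀ d : ℕ, 1 ≤ d → ∀ ε : ℝ, ε ∈ Set.Ioo (0 : ℝ) 1 →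
    (infoCount Λ d ε : ℝ) ≤ C * (d : ℝ) ^ q * ε ^ (-p)

/-- Quasi-polynomial tractability. -/
def IsQPT (Λ : ℕ → ℕ → ℝ) : Prop :=
  ∃ C t : ℝ, 0 < C ∧ 0 < t ∧ ∀ d : ℕ, 1 ≤ d → ∀ ε : ℝ, ε ∈ Set.Ioo (0 : ℝ) 1 →
    (infoCount Λ d ε : ℝ) ≤ C * Real.exp (t * (1 + Real.log d) * (1 + Real.log ε⁻¹))

/-- The exponent `t*` of quasi-polynomial tractability. -/
noncomputable def qptExponent (Λ : ℕ → ℕ → ℝ) : ℝ :=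
  sInf {t : ℝ | 0 < t ∧ ∃ C : ℝ, 0 < C ∧ ∀ d : ℕ, 1 ≤ d → ∀ ε : ℝ, ε ∈ Set.Ioo (0 : ℝ) 1 →
    (infoCount Λ d ε : ℝ) ≤ C * Real.exp (t * (1 + Real.log d) * (1 + Real.log ε⁻¹))}

/-- The filter describing `ε⁻¹ + d → ∞` over pairs `(ε, d)` with `ε ∈ (0,1)` and `d ≥ 1`. -/
noncomputable def wtFilter : Filter (ℝ × ℕ) :=
  (Filter.comap (fun p : ℝ × ℕ => p.1⁻¹ + (p.2 : ℝ)) Filter.atTop) ⊓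
    Filter.principal {p : ℝ × ℕ | p.1 ∈ Set.Ioo (0 : ℝ) 1 ∧ 1 ≤ p.2}

/-- `(s,t)`-weak tractability: `ln n(ε,d) / (ε^{-s} + d^t) → 0` as `ε⁻¹ + d → ∞`. -/
def IsWT (Λ : ℕ → ℕ → ℝ) (s t : ℝ) : Prop :=
  Filter.Tendsto
    (fun p : ℝ × ℕ => Real.log (infoCount Λ p.2 p.1) / (p.1 ^ (-s) + (p.2 : ℝ) ^ t))
    wtFilter (nhds 0)

/-- Uniform weak tractability. -/
def IsUWT (Λ : ℕ → ℕ → ℝ) : Prop := ∀ s t : ℝ, 0 < s → 0 < t → IsWT Λ s t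

/-- The problem suffers from the curse of dimensionality. -/
def SuffersCurse (Λ : ℕ → ℕ → ℝ) : Prop :=
  ∃ C ε₀ α : ℝ, 0 < C ∧ 0 < ε₀ ∧ 0 < α ∧ ∀ ε : ℝ, 0 < ε → ε ≤ ε₀ →
    {d : ℕ | C * (1 + α) ^ d ≤ (infoCount Λ d ε : ℝ)}.Infinite

/-- Condition (3) of Property (P) for a given `τ > 0`:
`H(k,τ) = ∑_{j≥2} (λ(k,j)/λ(k,2))^τ` is finite for each `k` and
`sup_k H(k,τ) = H(1,τ)` (equivalently `H(k,τ) ≤ H(1,τ)` for all `k`). -/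
def Cond3 (Λ : ℕ → ℕ → ℝ) (τ : ℝ) : Prop :=
  0 < τ ∧ (∀ k, Summable fun j : ℕ => (Λ k (j + 1) / Λ k 1) ^ τ) ∧
    ∀ k, (∑' j : ℕ, (Λ k (j + 1) / Λ k 1) ^ τ) ≤ ∑' j : ℕ, (Λ 0 (j + 1) / Λ 0 1) ^ τ

/-- `τ₀`: the infimum of all `τ` satisfying Condition (3). -/
noncomputable def tau0 (Λ : ℕ → ℕ → ℝ) : ℝ := sInf {τ : ℝ | Cond3 Λ τ}

/-- Property (P): each sequence `λ(k,·)` is nonincreasing and nonnegative with `λ(k,1) = 1`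
and `λ(k,2) > 0`, `h_k = λ(k,2)` is nonincreasing, and Condition (3) holds for some `τ > 0`. -/
structure PropertyP (Λ : ℕ → ℕ → ℝ) : Prop where
  nonneg : ∀ k j, 0 ≤ Λ k j
  anti : ∀ k, Antitone (Λ k)
  first : ∀ k, Λ k 0 = 1
  second_pos : ∀ k, 0 < Λ k 1
  h_anti : Antitone fun k => Λ k 1
  cond3 : ∃ τ : ℝ, Cond3 Λ τ

/-- Eigenvalues of the Euler-kernel problem (absolute error criterion):
`λ(k,j) = (π(j-1/2))^{-(2r_k+2)}` (0-indexed: `eulerAbsLam r k j = (π(j+1/2))^{-(2 r_{k+1}+2)}`). -/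
noncomputable def eulerAbsLam (r : ℕ → ℕ) (k j : ℕ) : ℝ :=
  ((Real.pi * ((j : ℝ) + 1 / 2)) ^ (2 * r k + 2))⁻¹

noncomputable def Aj (j : ℕ) : ℝ := Real.pi * ((j:ℝ) + 1/2)

lemma one_lt_Aj (j : ℕ) : 1 < Aj j := by
  have h := Real.pi_gt_three
  have hj : (0:ℝ) ≤ (j:ℝ) := Nat.cast_nonneg j
  unfold Aj; nlinarith

lemma Aj_pos (j : ℕ) : 0 < Aj j := lt_trans one_pos (one_lt_Aj j)

lemma add_one_le_Aj (j : ℕ) : (j:ℝ) + 1 ≤ Aj j := by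
  have h := Real.pi_gt_three
  have hj : (0:ℝ) ≤ (j:ℝ) := Nat.cast_nonneg j
  unfold Aj; nlinarith

lemma summable_G {x : ℝ} (hx : 1 < x) : Summable (fun j : ℕ => Aj j ^ (-x)) := by
  have h1 : Summable (fun j : ℕ => ((j:ℝ)+1) ^ (-x)) := by
    have := (Real.summable_nat_rpow (p := -x)).2 (by linarith)
    exact_mod_cast (summable_nat_add_iff 1).2 this
  refine Summable.of_nonneg_of_le (fun j => Real.rpow_nonneg (Aj_pos j).le _) (fun j => ?_) h1
  exact Real.rpow_le_rpow_of_nonpos (by positivity) (add_one_le_Aj j) (by linarith)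

noncomputable def Gfun (x : ℝ) : ℝ := ∑' j : ℕ, Aj j ^ (-x)

lemma G_le_G {x y : ℝ} (hx : 1 < x) (hxy : x ≤ y) : Gfun y ≤ Gfun x := by
  refine Summable.tsum_le_tsum (fun j => ?_) (summable_G (lt_of_lt_of_le hx hxy)) (summable_G hx)
  exact Real.rpow_le_rpow_of_exponent_le (one_lt_Aj j).le (by linarith)

lemma G_lt_G {x y : ℝ} (hx : 1 < x) (hxy : x < y) : Gfun y < Gfun x := by
  refine Summable.tsum_lt_tsum (i := 0) (fun j => ?_) ?_ (summable_G (lt_trans hx hxy)) (summable_G hx)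
  · exact Real.rpow_le_rpow_of_exponent_le (one_lt_Aj j).le (by linarith)
  · exact Real.rpow_lt_rpow_of_exponent_lt (one_lt_Aj 0) (by linarith)

lemma G_nonneg {x : ℝ} : 0 ≤ Gfun x :=
  tsum_nonneg (fun j => Real.rpow_nonneg (Aj_pos j).le _)

lemma lam_def (r : ℕ → ℕ) (k j : ℕ) : eulerAbsLam r k j = ((Aj j) ^ (2 * r k + 2))⁻¹ := rfl

lemma lam_pos (r : ℕ → ℕ) (k j : ℕ) : 0 < eulerAbsLam r k j := by
  rw [lam_def]
  have := Aj_pos j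
  positivity

lemma lam_le_one (r : ℕ → ℕ) (k j : ℕ) : eulerAbsLam r k j ≤ 1 := by
  rw [lam_def, inv_le_one_iff₀]; right
  exact one_le_pow₀ (one_lt_Aj j).le

lemma lam_rpow (r : ℕ → ℕ) (k j : ℕ) (τ : ℝ) :
    eulerAbsLam r k j ^ τ = Aj j ^ (-(((2 * r k + 2 : ℕ) : ℝ) * τ)) := by
  rw [lam_def, ← Real.rpow_natCast (Aj j) (2 * r k + 2), ← Real.rpow_neg (Aj_pos j).le,
    ← Real.rpow_mul (Aj_pos j).le, neg_mul]

lemma lam_le_inv (r : ℕ → ℕ) (k j : ℕ) : eulerAbsLam r k j ≤ ((j:ℝ) + 1)⁻¹ := by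
  rw [lam_def]
  refine inv_anti₀ (by positivity) ?_
  calc (j:ℝ) + 1 ≤ Aj j := add_one_le_Aj j
    _ ≤ Aj j ^ (2 * r k + 2) := le_self_pow₀ (one_lt_Aj j).le (by omega)

lemma tsum_pi_prod (d : ℕ) (f : ℕ → ℕ → ENNReal) :
    ∑' j : Fin d → ℕ, ∏ k : Fin d, f k.val (j k) = ∏ k : Fin d, ∑' n : ℕ, f k.val n := by
  induction d generalizing f with
  | zero => simp [tsum_fintype]
  | succ d ih =>
    rw [← (Fin.consEquiv (fun _ : Fin (d+1) => ℕ)).tsum_eq]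
    have key : ∀ c : ℕ × (Fin d → ℕ),
        (∏ k : Fin (d+1), f k.val ((Fin.consEquiv (fun _ : Fin (d+1) => ℕ)) c k))
          = f 0 c.1 * ∏ k : Fin d, f (k.val+1) (c.2 k) := by
      intro c
      rw [Fin.prod_univ_succ]
      simp [Fin.consEquiv, Fin.cons_succ]
    rw [tsum_congr key,
      ENNReal.tsum_prod (f := fun (n : ℕ) (jj : Fin d → ℕ) => f 0 n * ∏ k : Fin d, f (k.val+1) (jj k))]
    calc ∑' (n : ℕ) (jj : Fin d → ℕ), f 0 n * ∏ k : Fin d, f (k.val+1) (jj k)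
        = ∑' (n : ℕ), f 0 n * ∑' jj : Fin d → ℕ, ∏ k : Fin d, (fun k => f (k+1)) k.val (jj k) := by
          simp only [ENNReal.tsum_mul_left]
      _ = (∑' n, f 0 n) * ∏ k : Fin d, ∑' n, f (k.val+1) n := by
          rw [ih (fun k => f (k+1)), ENNReal.tsum_mul_right]
      _ = ∏ k : Fin (d+1), ∑' n, f k.val n := by
          rw [Fin.prod_univ_succ]; simp

lemma card_mul_le_tsum {ι : Type*} (S : Set ι) (hS : S.Finite) (g : ι → ENNReal) (c : ENNReal)
    (h : ∀ j ∈ S, c ≤ g j) : (Nat.card S : ENNReal) * c ≤ ∑' j, g j := by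
  classical
  have h1 : (Nat.card S : ENNReal) * c = ∑ j ∈ hS.toFinset, c := by
    rw [Finset.sum_const, Nat.card_coe_set_eq, Set.ncard_eq_toFinset_card _ hS,
      nsmul_eq_mul]
  rw [h1]
  refine le_trans (Finset.sum_le_sum fun j hj => h j (hS.mem_toFinset.1 hj)) ?_
  exact ENNReal.sum_le_tsum _

lemma tsum_indicator_le_card {ι : Type*} (S : Set ι) (hS : S.Finite) (c : ENNReal) :
    ∑' j, S.indicator (fun _ => c) j ≤ (Nat.card S : ENNReal) * c := by
  classical
  rw [tsum_eq_sum (s := hS.toFinset) (fun b hb => Set.indicator_of_notMem (by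
    simpa using fun h => hb (hS.mem_toFinset.2 h)) _)]
  calc ∑ j ∈ hS.toFinset, S.indicator (fun _ => c) j ≤ ∑ j ∈ hS.toFinset, c := by
        refine Finset.sum_le_sum fun j hj => ?_
        rw [Set.indicator_of_mem (hS.mem_toFinset.1 hj)]
    _ = (Nat.card S : ENNReal) * c := by
        rw [Finset.sum_const, Nat.card_coe_set_eq, Set.ncard_eq_toFinset_card _ hS,
          nsmul_eq_mul]

noncomputable def phiE (x : ℝ) : ENNReal := ∑' j : ℕ, ENNReal.ofReal (Aj j ^ (-x))

lemma phiE_eq {x : ℝ} (hx : 1 < x) : phiE x = ENNReal.ofReal (Gfun x) := by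
  rw [Gfun, ENNReal.ofReal_tsum_of_nonneg (fun j => Real.rpow_nonneg (Aj_pos j).le _)
    (summable_G hx)]
  rfl

lemma phiE_mono {x y : ℝ} (hxy : x ≤ y) : phiE y ≤ phiE x := by
  refine ENNReal.tsum_le_tsum fun j => ENNReal.ofReal_le_ofReal ?_
  exact Real.rpow_le_rpow_of_exponent_le (one_lt_Aj j).le (by linarith)

lemma prod_lam_le_factor (r : ℕ → ℕ) (d : ℕ) (j : Fin d → ℕ) (k0 : Fin d) :
    ∏ k : Fin d, eulerAbsLam r k.val (j k) ≤ eulerAbsLam r k0.val (j k0) := by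
  rw [← Finset.mul_prod_erase Finset.univ _ (Finset.mem_univ k0)]
  have h1 : ∏ k ∈ Finset.univ.erase k0, eulerAbsLam r k.val (j k) ≤ 1 :=
    Finset.prod_le_one (fun k _ => (lam_pos r _ _).le) (fun k _ => lam_le_one r _ _)
  nlinarith [lam_pos r k0.val (j k0), h1,
    Finset.prod_nonneg (fun k (_ : k ∈ Finset.univ.erase k0) => (lam_pos r k.val (j k)).le)]

lemma prod_lam_pos (r : ℕ → ℕ) (d : ℕ) (j : Fin d → ℕ) :
    0 < ∏ k : Fin d, eulerAbsLam r k.val (j k) :=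
  Finset.prod_pos fun k _ => lam_pos r _ _

lemma prod_lam_le_one (r : ℕ → ℕ) (d : ℕ) (j : Fin d → ℕ) :
    ∏ k : Fin d, eulerAbsLam r k.val (j k) ≤ 1 :=
  Finset.prod_le_one (fun k _ => (lam_pos r _ _).le) (fun k _ => lam_le_one r _ _)

lemma S_finite (r : ℕ → ℕ) (d : ℕ) {ε : ℝ} (hε : 0 < ε) :
    {j : Fin d → ℕ | ε ^ 2 < ∏ k : Fin d, eulerAbsLam r k.val (j k)}.Finite := by
  set M := ⌈(ε^2)⁻¹⌉₊ with hM
  have hsub : {j : Fin d → ℕ | ε ^ 2 < ∏ k : Fin d, eulerAbsLam r k.val (j k)} ⊆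
      Set.pi Set.univ (fun _ : Fin d => Set.Iio M) := by
    intro j hj k _
    have h1 : ε ^ 2 < ((j k : ℝ) + 1)⁻¹ :=
      lt_of_lt_of_le hj ((prod_lam_le_factor r d j k).trans (lam_le_inv r _ _))
    have h2 : (j k : ℝ) + 1 < (ε ^ 2)⁻¹ := by
      rw [lt_inv_comm₀ (by positivity) (by positivity)] at h1
      exact h1
    have h3 : (j k : ℝ) + 1 < M := lt_of_lt_of_le h2 (Nat.le_ceil _)
    simp only [Set.mem_Iio]
    have : (j k : ℝ) < M := by linarith
    exact_mod_cast this
  exact Set.Finite.subset (Set.Finite.pi fun _ => Set.finite_Iio M) hsub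

lemma count_le (r : ℕ → ℕ) (d : ℕ) {ε τ : ℝ} (hε : 0 < ε) (hτ : 0 < τ) :
    (infoCount (eulerAbsLam r) d ε : ENNReal) * ENNReal.ofReal ((ε^2) ^ τ) ≤
      ∏ k : Fin d, phiE (((2 * r k.val + 2 : ℕ) : ℝ) * τ) := by
  have key : ∀ j : Fin d → ℕ,
      ENNReal.ofReal ((∏ k : Fin d, eulerAbsLam r k.val (j k)) ^ τ)
        = ∏ k : Fin d, ENNReal.ofReal (Aj (j k) ^ (-(((2 * r k.val + 2 : ℕ) : ℝ) * τ))) := by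
    intro j
    rw [← Real.finset_prod_rpow _ _ (fun k _ => (lam_pos r _ _).le),
      ENNReal.ofReal_prod_of_nonneg (fun k _ => Real.rpow_nonneg (lam_pos r _ _).le _)]
    exact Finset.prod_congr rfl fun k _ => by rw [lam_rpow]
  calc (infoCount (eulerAbsLam r) d ε : ENNReal) * ENNReal.ofReal ((ε^2) ^ τ)
      ≤ ∑' j : Fin d → ℕ, ENNReal.ofReal ((∏ k : Fin d, eulerAbsLam r k.val (j k)) ^ τ) := by
        refine card_mul_le_tsum _ (S_finite r d hε) _ _ fun j hj => ?_
        exact ENNReal.ofReal_le_ofReal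
          (Real.rpow_le_rpow (by positivity) (le_of_lt hj) hτ.le)
    _ = ∏ k : Fin d, phiE (((2 * r k.val + 2 : ℕ) : ℝ) * τ) := by
        rw [tsum_congr key]
        exact tsum_pi_prod d (fun k n => ENNReal.ofReal (Aj n ^ (-(((2 * r k + 2 : ℕ) : ℝ) * τ))))

lemma half_pow_eq (m : ℕ) : ((1:ℝ)/2) ^ m = (2:ℝ) ^ (-(m:ℝ)) := by
  rw [one_div, inv_pow, ← Real.rpow_natCast (2:ℝ) m, ← Real.rpow_neg (by norm_num)]

lemma spt_sum_bound (r : ℕ → ℕ) (C p τ : ℝ) (hC : 0 ≤ C) (hp : 0 ≤ p) (hτ : p/2 < τ)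
    (h : ∀ d : ℕ, 1 ≤ d → ∀ ε : ℝ, ε ∈ Set.Ioo (0:ℝ) 1 →
      (infoCount (eulerAbsLam r) d ε : ℝ) ≤ C * ε ^ (-p))
    (d : ℕ) (hd : 1 ≤ d) :
    ∏ k : Fin d, phiE (((2 * r k.val + 2 : ℕ) : ℝ) * τ) ≤
      ENNReal.ofReal (C * 2 ^ (p/2)) * (1 - ENNReal.ofReal ((2:ℝ) ^ (p/2 - τ)))⁻¹ := by
  have hτ0 : 0 < τ := lt_of_le_of_lt (by positivity) hτ
  set Λp : (Fin d → ℕ) → ℝ := fun j => ∏ k : Fin d, eulerAbsLam r k.val (j k) with hΛp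
  -- the dyadic scale
  set eps : ℕ → ℝ := fun m => Real.sqrt (((1:ℝ)/2) ^ (m+1)) with heps
  have heps_pos : ∀ m, 0 < eps m := fun m => Real.sqrt_pos.2 (by positivity)
  have heps_lt_one : ∀ m, eps m < 1 := by
    intro m
    rw [heps]
    have : ((1:ℝ)/2) ^ (m+1) < 1 := pow_lt_one₀ (by norm_num) (by norm_num) (by omega)
    calc Real.sqrt (((1:ℝ)/2) ^ (m+1)) < Real.sqrt 1 :=
          (Real.sqrt_lt_sqrt (by positivity) this)
      _ = 1 := Real.sqrt_one
  have heps_sq : ∀ m, (eps m) ^ 2 = ((1:ℝ)/2) ^ (m+1) := fun m =>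
    Real.sq_sqrt (by positivity)
  set T : ℕ → Set (Fin d → ℕ) :=
    fun m => {j : Fin d → ℕ | (eps m) ^ 2 < ∏ k : Fin d, eulerAbsLam r k.val (j k)} with hT
  set c : ℕ → ENNReal := fun m => ENNReal.ofReal ((2:ℝ) ^ (-(m:ℝ) * τ)) with hc
  -- step 1: product = tsum
  have key : ∀ j : Fin d → ℕ,
      (∏ k : Fin d, ENNReal.ofReal (Aj (j k) ^ (-(((2 * r k.val + 2 : ℕ) : ℝ) * τ))))
        = ENNReal.ofReal ((Λp j) ^ τ) := by
    intro j
    rw [hΛp, ← Real.finset_prod_rpow _ _ (fun k _ => (lam_pos r _ _).le),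
      ENNReal.ofReal_prod_of_nonneg (fun k _ => Real.rpow_nonneg (lam_pos r _ _).le _)]
    exact (Finset.prod_congr rfl fun k _ => by rw [lam_rpow]).symm
  have step1 : ∏ k : Fin d, phiE (((2 * r k.val + 2 : ℕ) : ℝ) * τ)
      = ∑' j : Fin d → ℕ, ENNReal.ofReal ((Λp j) ^ τ) := by
    have h2 := tsum_pi_prod d (fun k n => ENNReal.ofReal (Aj n ^ (-(((2 * r k + 2 : ℕ) : ℝ) * τ))))
    rw [tsum_congr key] at h2
    simp only [phiE]
    exact h2.symm
  -- step 2: pointwise domination by dyadic indicators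
  have step2 : ∀ j : Fin d → ℕ, ENNReal.ofReal ((Λp j) ^ τ) ≤
      ∑' m : ℕ, (T m).indicator (fun _ => c m) j := by
    intro j
    have hΛpos : 0 < Λp j := prod_lam_pos r d j
    have hΛle1 : Λp j ≤ 1 := prod_lam_le_one r d j
    -- find the dyadic bucket
    have hex : ∃ n : ℕ, ((1:ℝ)/2) ^ (n+1) < Λp j := by
      obtain ⟨n, hn⟩ := exists_pow_lt_of_lt_one hΛpos (show (1:ℝ)/2 < 1 by norm_num)
      exact ⟨n, lt_of_le_of_lt (pow_le_pow_of_le_one (by norm_num) (by norm_num)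
        (by omega)) hn⟩
    set m := Nat.find hex with hm
    have hm1 : ((1:ℝ)/2) ^ (m+1) < Λp j := Nat.find_spec hex
    have hm2 : Λp j ≤ ((1:ℝ)/2) ^ m := by
      rcases Nat.eq_zero_or_pos m with h0 | h0
      · rw [h0, pow_zero]; exact hΛle1
      · have := Nat.find_min hex (m := m - 1) (by omega)
        push_neg at this
        have : Λp j ≤ ((1:ℝ)/2) ^ (m - 1 + 1) := this
        simpa [Nat.sub_add_cancel h0] using this
    have hjT : j ∈ T m := by
      rw [hT]; simp only [Set.mem_setOf_eq]
      rw [heps_sq]; exact hm1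
    calc ENNReal.ofReal ((Λp j) ^ τ) ≤ c m := by
          rw [hc]
          refine ENNReal.ofReal_le_ofReal ?_
          calc (Λp j) ^ τ ≤ (((1:ℝ)/2) ^ m) ^ τ :=
                Real.rpow_le_rpow hΛpos.le hm2 hτ0.le
            _ = (2:ℝ) ^ (-(m:ℝ) * τ) := by
                rw [half_pow_eq, ← Real.rpow_mul (by norm_num)]
      _ = (T m).indicator (fun _ => c m) j := by rw [Set.indicator_of_mem hjT]
      _ ≤ ∑' m : ℕ, (T m).indicator (fun _ => c m) j := ENNReal.le_tsum m
  -- step 3: sum the buckets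
  have hcard : ∀ m : ℕ, (Nat.card (T m) : ENNReal) * c m ≤
      ENNReal.ofReal ((C * 2 ^ (p/2)) * ((2:ℝ) ^ (p/2 - τ)) ^ m) := by
    intro m
    have hinfo : (Nat.card (T m) : ℝ) ≤ C * (eps m) ^ (-p) :=
      h d hd (eps m) ⟨heps_pos m, heps_lt_one m⟩
    have hepsp : (eps m) ^ (-p) = (2:ℝ) ^ (((m:ℝ)+1) * (p/2)) := by
      have h1 : eps m = ((2:ℝ) ^ (-((m:ℝ)+1))) ^ ((1:ℝ)/2) := by
        simp only [heps]
        rw [Real.sqrt_eq_rpow, half_pow_eq]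
        push_cast
        norm_num
      rw [h1, ← Real.rpow_mul (by positivity), ← Real.rpow_mul (by norm_num)]
      congr 1; ring
    have hgeom : (2:ℝ) ^ (((m:ℝ)+1) * (p/2)) * (2:ℝ) ^ (-(m:ℝ) * τ)
        = 2 ^ (p/2) * ((2:ℝ) ^ (p/2 - τ)) ^ m := by
      rw [← Real.rpow_add (by norm_num), ← Real.rpow_natCast ((2:ℝ) ^ (p/2 - τ)) m,
        ← Real.rpow_mul (by norm_num), ← Real.rpow_add (by norm_num)]
      congr 1; ring
    calc (Nat.card (T m) : ENNReal) * c m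
        ≤ ENNReal.ofReal (C * (eps m) ^ (-p)) * c m := by
          gcongr
          rw [← ENNReal.ofReal_natCast]
          exact ENNReal.ofReal_le_ofReal hinfo
      _ = ENNReal.ofReal ((C * (eps m) ^ (-p)) * (2:ℝ) ^ (-(m:ℝ) * τ)) := by
          rw [hc, ← ENNReal.ofReal_mul (by positivity)]
      _ = ENNReal.ofReal ((C * 2 ^ (p/2)) * ((2:ℝ) ^ (p/2 - τ)) ^ m) := by
          rw [hepsp]
          congr 1
          rw [mul_assoc, hgeom, mul_assoc]
  have hTfin : ∀ m, (T m).Finite := fun m => S_finite r d (heps_pos m)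
  calc ∏ k : Fin d, phiE (((2 * r k.val + 2 : ℕ) : ℝ) * τ)
      = ∑' j : Fin d → ℕ, ENNReal.ofReal ((Λp j) ^ τ) := step1
    _ ≤ ∑' (j : Fin d → ℕ) (m : ℕ), (T m).indicator (fun _ => c m) j :=
        ENNReal.tsum_le_tsum step2
    _ = ∑' (m : ℕ) (j : Fin d → ℕ), (T m).indicator (fun _ => c m) j := ENNReal.tsum_comm
    _ ≤ ∑' m : ℕ, ENNReal.ofReal ((C * 2 ^ (p/2)) * ((2:ℝ) ^ (p/2 - τ)) ^ m) := by
        refine ENNReal.tsum_le_tsum fun m => ?_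
        exact le_trans (tsum_indicator_le_card (T m) (hTfin m) (c m)) (hcard m)
    _ = ENNReal.ofReal (C * 2 ^ (p/2)) * (1 - ENNReal.ofReal ((2:ℝ) ^ (p/2 - τ)))⁻¹ := by
        have : ∀ m : ℕ, ENNReal.ofReal ((C * 2 ^ (p/2)) * ((2:ℝ) ^ (p/2 - τ)) ^ m)
            = ENNReal.ofReal (C * 2 ^ (p/2)) * (ENNReal.ofReal ((2:ℝ) ^ (p/2 - τ))) ^ m := by
          intro m
          rw [ENNReal.ofReal_mul (by positivity), ENNReal.ofReal_pow (by positivity)]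
        rw [tsum_congr this, ENNReal.tsum_mul_left, ENNReal.tsum_geometric]

lemma mem_upper (r : ℕ → ℕ) (hr : Monotone r) (ξ₀ : ℝ) (hξ : ξ₀ ∈ Set.Ioo (1:ℝ) 2)
    (hG : Gfun ξ₀ = 1) (p : ℝ) (hp0 : 1/((r 0 : ℝ)+1) < p) (K : ℕ)
    (hK : ∀ k, K ≤ k → ξ₀ ≤ ((2 * r k + 2 : ℕ) : ℝ) * (p/2)) :
    ∃ C : ℝ, 0 ≤ C ∧ ∀ d : ℕ, 1 ≤ d → ∀ ε : ℝ, ε ∈ Set.Ioo (0:ℝ) 1 →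
      (infoCount (eulerAbsLam r) d ε : ℝ) ≤ C * ε ^ (-p) := by
  have hppos : 0 < p := lt_trans (by positivity) hp0
  set τ := p/2 with hτdef
  have hτpos : 0 < τ := by positivity
  set x : ℕ → ℝ := fun k => ((2 * r k + 2 : ℕ) : ℝ) * τ with hx
  have hx1 : ∀ k, 1 < x k := by
    intro k
    have h1 : ((r 0 : ℝ) + 1) * p > 1 := by
      rw [div_lt_iff₀ (by positivity)] at hp0
      linarith
    have h2 : (r 0 : ℝ) ≤ (r k : ℝ) := by exact_mod_cast hr (Nat.zero_le k)
    have : x k = ((r k : ℝ) + 1) * p := by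
      rw [hx]; push_cast; ring
    rw [this]
    nlinarith
  set M : ℕ → ENNReal := fun k => max (phiE (x k)) 1 with hM
  have hMone : ∀ k, K ≤ k → M k = 1 := by
    intro k hk
    have h1 : phiE (x k) ≤ 1 := by
      rw [phiE_eq (hx1 k)]
      calc ENNReal.ofReal (Gfun (x k)) ≤ ENNReal.ofReal (Gfun ξ₀) :=
            ENNReal.ofReal_le_ofReal (G_le_G hξ.1 (hK k hk))
        _ = 1 := by rw [hG, ENNReal.ofReal_one]
    rw [hM]; simp [max_eq_right h1]
  have hMne : ∀ k, M k ≠ ⊤ := by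
    intro k
    rw [hM]
    exact ne_top_of_lt (max_lt (phiE_eq (hx1 k) ▸ ENNReal.ofReal_lt_top) ENNReal.one_lt_top)
  set CE : ENNReal := ∏ k ∈ Finset.range K, M k with hCE
  have hCEne : CE ≠ ⊤ := by
    rw [hCE]
    exact (ENNReal.prod_lt_top (fun k _ => (hMne k).lt_top)).ne
  have hprod : ∀ d : ℕ, ∏ k : Fin d, phiE (x k) ≤ CE := by
    intro d
    calc ∏ k : Fin d, phiE (x k) ≤ ∏ k : Fin d, M k.val :=
          Finset.prod_le_prod' (fun k _ => le_max_left _ _)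
      _ = ∏ k ∈ Finset.range d, M k := Fin.prod_univ_eq_prod_range (fun k => M k) d
      _ = ∏ k ∈ Finset.range (min d K), M k := by
          refine (Finset.prod_subset (Finset.range_subset_range.2 (min_le_left d K)) ?_).symm
          intro k hk hnk
          simp only [Finset.mem_range] at hk hnk
          exact hMone k (by omega)
      _ ≤ ∏ k ∈ Finset.range K, M k := by
          refine Finset.prod_le_prod_of_subset_of_one_le'
            (Finset.range_subset_range.2 (min_le_right d K)) (fun k _ _ => le_max_right _ _)
  refine ⟨CE.toReal, ENNReal.toReal_nonneg, fun d hd ε hε => ?_⟩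
  have h1 := le_trans (count_le r d hε.1 hτpos) (hprod d)
  have h2 : ((infoCount (eulerAbsLam r) d ε : ENNReal) * ENNReal.ofReal ((ε^2) ^ τ)).toReal
      ≤ CE.toReal := ENNReal.toReal_mono hCEne h1
  rw [ENNReal.toReal_mul, ENNReal.toReal_natCast,
    ENNReal.toReal_ofReal (Real.rpow_nonneg (by positivity) _)] at h2
  have hposτ : 0 < ((ε^2:ℝ)) ^ τ := Real.rpow_pos_of_pos (pow_pos hε.1 2) _
  have hep : ε ^ (-p) = (((ε^2:ℝ)) ^ τ)⁻¹ := by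
    have h3 : (ε:ℝ)^2 = ε ^ ((2:ℕ):ℝ) := (Real.rpow_natCast ε 2).symm
    rw [h3, ← Real.rpow_mul hε.1.le, ← Real.rpow_neg hε.1.le]
    congr 1
    push_cast
    ring
  rw [hep, ← div_eq_mul_inv]
  exact (le_div_iff₀ hposτ).2 h2

lemma lower_one (r : ℕ → ℕ) (C p : ℝ) (hC : 0 ≤ C) (hp : 0 ≤ p)
    (h : ∀ d : ℕ, 1 ≤ d → ∀ ε : ℝ, ε ∈ Set.Ioo (0:ℝ) 1 →
      (infoCount (eulerAbsLam r) d ε : ℝ) ≤ C * ε ^ (-p)) :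
    1/((r 0 : ℝ)+1) ≤ p := by
  by_contra hlt
  push_neg at hlt
  set q : ℝ := 1/((r 0 : ℝ)+1) with hq
  have hqpos : 0 < q := by positivity
  -- the key counting estimate in dimension 1
  have hcount : ∀ ε : ℝ, ε ∈ Set.Ioo (0:ℝ) 1 →
      ε ^ (-q) / Real.pi - 1 ≤ (infoCount (eulerAbsLam r) 1 ε : ℝ) := by
    intro ε hε
    set t : ℝ := ε ^ (-q) with ht
    have htpos : 0 < t := Real.rpow_pos_of_pos hε.1 _
    set m' : ℕ := ⌊t / Real.pi⌋₊ with hm'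
    set S : Set (Fin 1 → ℕ) :=
      {j : Fin 1 → ℕ | ε ^ 2 < ∏ k : Fin 1, eulerAbsLam r k.val (j k)} with hS
    have hmem : ∀ n : ℕ, n < m' → (fun _ : Fin 1 => n) ∈ S := by
      intro n hn
      have h1 : (n:ℝ) + 1 ≤ (m' : ℝ) := by exact_mod_cast hn
      have h2 : (m' : ℝ) ≤ t / Real.pi := Nat.floor_le (by positivity)
      have h3 : Aj n < t := by
        have : Real.pi * ((n:ℝ) + 1) ≤ t := by
          rw [← le_div_iff₀' Real.pi_pos]
          linarith
        calc Aj n < Real.pi * ((n:ℝ) + 1) := by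
              unfold Aj
              have := Real.pi_pos
              nlinarith
          _ ≤ t := this
      have h4 : Aj n ^ (2 * r 0 + 2) < (ε ^ 2)⁻¹ := by
        have h5 : Aj n ^ (2 * r 0 + 2) < t ^ (2 * r 0 + 2) :=
          pow_lt_pow_left₀ h3 (Aj_pos n).le (by omega)
        have h6 : t ^ (2 * r 0 + 2) = (ε^2)⁻¹ := by
          have e1 : ((ε:ℝ)^2)⁻¹ = ε ^ (-(2:ℝ)) := by
            rw [Real.rpow_neg hε.1.le, Real.rpow_two]
          rw [ht, ← Real.rpow_natCast (ε ^ (-q)) (2 * r 0 + 2),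
            ← Real.rpow_mul hε.1.le, e1]
          congr 1
          have hr0 : ((r 0 : ℝ) + 1) ≠ 0 := by positivity
          rw [hq]
          push_cast
          field_simp
        rw [← h6]; exact h5
      simp only [hS, Set.mem_setOf_eq, Fin.prod_univ_one]
      rw [lam_def, lt_inv_comm₀ (pow_pos hε.1 2) (pow_pos (Aj_pos n) _)]
      exact h4
    have hfin : S.Finite := S_finite r 1 hε.1
    have hcard : m' ≤ Nat.card S := by
      have hfS : Finite S := hfin.to_subtype
      have : Function.Injective (fun n : Fin m' => (⟨fun _ => (n:ℕ), hmem n n.2⟩ : S)) := by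
        intro a b hab
        have := congrArg (fun z : S => (z : Fin 1 → ℕ) 0) hab
        simpa using Fin.ext (by exact_mod_cast this)
      have := Nat.card_le_card_of_injective _ this (α := Fin m')
      simpa using this
    calc ε ^ (-q) / Real.pi - 1 ≤ (m' : ℝ) := by
          have := Nat.sub_one_lt_floor (t / Real.pi)
          rw [← ht]
          have h7 : t / Real.pi - 1 < (m' : ℝ) := by exact_mod_cast this
          linarith
      _ ≤ (infoCount (eulerAbsLam r) 1 ε : ℝ) := by
          have : infoCount (eulerAbsLam r) 1 ε = Nat.card S := rfl
          rw [this]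
          exact_mod_cast hcard
  -- derive a contradiction
  set u : ℝ := max 2 ((Real.pi * (C+1) + 1) ^ (q - p)⁻¹) with hu
  have hu2 : (2:ℝ) ≤ u := le_max_left _ _
  have hu1 : (1:ℝ) < u := by linarith
  have hε : (u⁻¹ : ℝ) ∈ Set.Ioo (0:ℝ) 1 := by
    constructor
    · positivity
    · rw [inv_lt_one_iff₀]; right; exact hu1
  have hinvq : (u⁻¹ : ℝ) ^ (-q) = u ^ q := by
    rw [Real.inv_rpow (by positivity), ← Real.rpow_neg (by positivity), neg_neg]
  have hinvp : (u⁻¹ : ℝ) ^ (-p) = u ^ p := by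
    rw [Real.inv_rpow (by positivity), ← Real.rpow_neg (by positivity), neg_neg]
  have hchain : u ^ q / Real.pi - 1 ≤ C * u ^ p := by
    have h1 := hcount u⁻¹ hε
    have h2 := h 1 le_rfl u⁻¹ hε
    rw [hinvq] at h1
    rw [hinvp] at h2
    linarith
  have hup1 : (1:ℝ) ≤ u ^ p := Real.one_le_rpow hu1.le hp
  have huqp : u ^ (q - p) ≤ Real.pi * (C + 1) := by
    have h1 : u ^ q ≤ Real.pi * (C+1) * u ^ p := by
      have hpi := Real.pi_pos
      have hd : u ^ q / Real.pi ≤ C * u ^ p + 1 := by linarith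
      rw [div_le_iff₀ hpi] at hd
      nlinarith [mul_le_mul_of_nonneg_left hup1 hpi.le]
    have h2 : u ^ q = u ^ (q - p) * u ^ p := by
      rw [← Real.rpow_add (by positivity)]
      congr 1; ring
    rw [h2] at h1
    have hupp : 0 < u ^ p := Real.rpow_pos_of_pos (by positivity) _
    calc u ^ (q-p) = u ^ (q-p) * u ^ p / u ^ p := by field_simp
      _ ≤ Real.pi * (C+1) * u ^ p / u ^ p := by gcongr
      _ = Real.pi * (C+1) := by field_simp
  have hbig : Real.pi * (C + 1) + 1 ≤ u ^ (q - p) := by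
    have h1 : ((Real.pi * (C+1) + 1) ^ (q - p)⁻¹) ≤ u := le_max_right _ _
    have h2 : (0:ℝ) < Real.pi * (C+1) + 1 := by positivity
    calc Real.pi * (C+1) + 1 = (((Real.pi * (C+1) + 1) ^ (q - p)⁻¹)) ^ (q-p) := by
          rw [Real.rpow_inv_rpow h2.le (by linarith [hlt] : q - p ≠ 0)]
      _ ≤ u ^ (q - p) := by
          refine Real.rpow_le_rpow (by positivity) h1 (by linarith)
  have hpi := Real.pi_pos
  linarith

lemma lower_two (r : ℕ → ℕ) (hr : Monotone r) (ξ₀ : ℝ) (hξ : ξ₀ ∈ Set.Ioo (1:ℝ) 2)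
    (hG : Gfun ξ₀ = 1) (N : ℕ) (hN : ∀ k, r k ≤ N) (C p : ℝ) (hC : 0 ≤ C) (hp : 0 ≤ p)
    (h : ∀ d : ℕ, 1 ≤ d → ∀ ε : ℝ, ε ∈ Set.Ioo (0:ℝ) 1 →
      (infoCount (eulerAbsLam r) d ε : ℝ) ≤ C * ε ^ (-p)) :
    ξ₀ / ((N:ℝ)+1) ≤ p := by
  by_contra hlt
  push_neg at hlt
  have hNpos : (0:ℝ) < 2*(N:ℝ)+2 := by positivity
  set τ : ℝ := (max (p/2) (1/(2*(N:ℝ)+2)) + ξ₀/(2*(N:ℝ)+2))/2 with hτ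
  have hm1 : p/2 < ξ₀/(2*(N:ℝ)+2) := by
    have e1 : ξ₀/(2*(N:ℝ)+2) = (ξ₀/((N:ℝ)+1))/2 := by
      rw [div_div]; ring_nf
    rw [e1]; linarith
  have hm2 : 1/(2*(N:ℝ)+2) < ξ₀/(2*(N:ℝ)+2) := by
    rw [div_lt_div_iff₀ hNpos hNpos]
    nlinarith [hξ.1]
  have hmax : max (p/2) (1/(2*(N:ℝ)+2)) < ξ₀/(2*(N:ℝ)+2) := max_lt hm1 hm2
  have hτp : p/2 < τ := by
    have := le_max_left (p/2) (1/(2*(N:ℝ)+2))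
    rw [hτ]; linarith
  have hτ0 : 0 < τ := by
    have h1 : 0 < 1/(2*(N:ℝ)+2) := by positivity
    have := le_max_right (p/2) (1/(2*(N:ℝ)+2))
    have h2 : 0 < ξ₀/(2*(N:ℝ)+2) := div_pos (by linarith [hξ.1]) hNpos
    rw [hτ]; linarith
  set x : ℝ := (2*(N:ℝ)+2) * τ with hxdef
  have hmaxmul : 1 ≤ (2*(N:ℝ)+2) * max (p/2) (1/(2*(N:ℝ)+2)) := by
    have := le_max_right (p/2) (1/(2*(N:ℝ)+2))
    calc (1:ℝ) = (2*(N:ℝ)+2) * (1/(2*(N:ℝ)+2)) := by field_simp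
      _ ≤ (2*(N:ℝ)+2) * max (p/2) (1/(2*(N:ℝ)+2)) := by gcongr
  have hmaxmul2 : (2*(N:ℝ)+2) * max (p/2) (1/(2*(N:ℝ)+2)) < ξ₀ := by
    rw [← lt_div_iff₀' hNpos]; exact hmax
  have hx1 : 1 < x := by
    rw [hxdef, hτ]
    have : (2*(N:ℝ)+2) * ξ₀/(2*(N:ℝ)+2) = ξ₀ := by field_simp
    nlinarith [hξ.1]
  have hxξ : x < ξ₀ := by
    rw [hxdef, hτ]
    have e : (2*(N:ℝ)+2) * (ξ₀/(2*(N:ℝ)+2)) = ξ₀ := by field_simp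
    nlinarith [hmaxmul2, e]
  have hg : 1 < Gfun x := by
    have := G_lt_G hx1 hxξ
    rw [hG] at this
    exact this
  set ρ : ENNReal := ENNReal.ofReal ((2:ℝ) ^ (p/2 - τ)) with hρ
  have hρ1 : ρ < 1 := by
    rw [hρ, ← ENNReal.ofReal_one]
    exact ENNReal.ofReal_lt_ofReal_iff_of_nonneg (by positivity) |>.2
      (Real.rpow_lt_one_of_one_lt_of_neg (by norm_num) (by linarith))
  set B : ENNReal := ENNReal.ofReal (C * 2 ^ (p/2)) * (1 - ρ)⁻¹ with hB
  have hBne : B ≠ ⊤ := by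
    rw [hB]
    refine ENNReal.mul_ne_top ENNReal.ofReal_ne_top ?_
    rw [ENNReal.inv_ne_top]
    exact (tsub_pos_iff_lt.2 hρ1).ne'
  have key : ∀ d : ℕ, 1 ≤ d → (Gfun x) ^ d ≤ B.toReal := by
    intro d hd
    have h1 : ENNReal.ofReal (Gfun x) ^ d ≤ ∏ k : Fin d, phiE (((2 * r k.val + 2 : ℕ):ℝ) * τ) := by
      calc ENNReal.ofReal (Gfun x) ^ d
          = ∏ _k : Fin d, ENNReal.ofReal (Gfun x) := by
            rw [Finset.prod_const, Finset.card_univ, Fintype.card_fin]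
        _ ≤ ∏ k : Fin d, phiE (((2 * r k.val + 2 : ℕ):ℝ) * τ) := by
            refine Finset.prod_le_prod' (fun k _ => ?_)
            rw [← phiE_eq hx1]
            refine phiE_mono ?_
            have h2 : (r k.val : ℝ) ≤ (N:ℝ) := by exact_mod_cast hN k.val
            rw [hxdef]
            push_cast
            nlinarith
    have h2 := le_trans h1 (spt_sum_bound r C p τ hC hp hτp h d hd)
    rw [← ENNReal.ofReal_pow G_nonneg] at h2
    exact (ENNReal.ofReal_le_iff_le_toReal hBne).1 h2
  obtain ⟨n, hn⟩ := pow_unbounded_of_one_lt B.toReal hg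
  have h3 := key (n+1) (by omega)
  have h4 : (Gfun x) ^ n ≤ (Gfun x) ^ (n+1) :=
    pow_le_pow_right₀ (by linarith) (by omega)
  linarith

lemma exists_plateau (r : ℕ → ℕ) (hr : Monotone r) (hb : ∃ B, ∀ k, r k ≤ B) :
    ∃ N K : ℕ, (∀ k, r k ≤ N) ∧ (∀ k, K ≤ k → r k = N) := by
  obtain ⟨B, hB⟩ := hb
  have hbdd : BddAbove (Set.range r) := ⟨B, fun x ⟨k, hk⟩ => hk ▸ hB k⟩
  have hne : (Set.range r).Nonempty := ⟨r 0, 0, rfl⟩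
  obtain ⟨K, hK⟩ := Nat.sSup_mem hne hbdd
  exact ⟨sSup (Set.range r), K, fun k => le_csSup hbdd ⟨k, rfl⟩,
    fun k hk => le_antisymm (le_csSup hbdd ⟨k, rfl⟩) (hK ▸ hr hk)⟩

lemma limsup_of_plateau (r : ℕ → ℕ) (N K : ℕ) (hK : ∀ k, K ≤ k → r k = N) :
    Filter.limsup (fun k : ℕ => (r k : ENNReal)) Filter.atTop = (N : ENNReal) := by
  have h : (fun k : ℕ => (r k : ENNReal)) =ᶠ[Filter.atTop] (fun _ => (N:ENNReal)) :=
    Filter.eventually_atTop.2 ⟨K, fun k hk => congrArg _ (hK k hk)⟩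
  rw [Filter.limsup_congr h, Filter.limsup_const]

lemma limsup_of_unbounded (r : ℕ → ℕ) (hr : Monotone r) (hu : ∀ B, ∃ k, B < r k) :
    Filter.limsup (fun k : ℕ => (r k : ENNReal)) Filter.atTop = ⊤ := by
  have ht : Filter.Tendsto (fun k : ℕ => (r k : ENNReal)) Filter.atTop (nhds ⊤) := by
    rw [ENNReal.tendsto_nhds_top_iff_nat]
    intro n
    obtain ⟨k0, hk0⟩ := hu n
    refine Filter.eventually_atTop.2 ⟨k0, fun k hk => ?_⟩
    have h1 : n < r k := lt_of_lt_of_le hk0 (hr hk)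
    exact_mod_cast h1
  exact ht.limsup_eq

/-- Euler kernels, absolute error criterion: SPT holds for every nondecreasing `(r_k)`, and
the exponent of SPT is `max{ξ₀/(r̄+1), 1/(r₁+1)}` where `r̄ = lim r_k ∈ [0,∞]` (here the
limsup in `ℝ≥0∞`, so that `ξ₀/(r̄+1) = 0` when `r̄ = ∞`) and `ξ₀` is the unique number in
`(1,2)` with `∑_{j≥1} (π(j-1/2))^{-ξ₀} = 1`. -/
theorem euler_abs_spt (r : ℕ → ℕ) (hr : Monotone r)
    (ξ₀ : ℝ) (hξ : ξ₀ ∈ Set.Ioo (1 : ℝ) 2)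
    (hG : (∑' j : ℕ, (Real.pi * ((j : ℝ) + 1 / 2)) ^ (-ξ₀)) = 1) :
    IsSPT (eulerAbsLam r) ∧
      sptExponent (eulerAbsLam r) =
        max ((ENNReal.ofReal ξ₀ /
            (Filter.limsup (fun k : ℕ => (r k : ENNReal)) Filter.atTop + 1)).toReal)
          (1 / ((r 0 : ℝ) + 1)) := by

  have hG' : Gfun ξ₀ = 1 := hG
  set Pset : Set ℝ := {p : ℝ | 0 ≤ p ∧ ∃ C : ℝ, 0 ≤ C ∧ ∀ d : ℕ, 1 ≤ d → ∀ ε : ℝ,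
    ε ∈ Set.Ioo (0 : ℝ) 1 →
    (infoCount (eulerAbsLam r) d ε : ℝ) ≤ C * ε ^ (-p)} with hPset
  have hbdd : BddBelow Pset := ⟨0, fun p hp => hp.1⟩
  by_cases hb : ∃ B, ∀ k, r k ≤ B
  · -- bounded case
    obtain ⟨N, K, hN, hKN⟩ := exists_plateau r hr hb
    set m : ℝ := max (ξ₀ / ((N:ℝ)+1)) (1 / ((r 0 : ℝ) + 1)) with hm
    have hm0 : 0 < m := lt_of_lt_of_le (by positivity) (le_max_right _ _)
    have hmem : ∀ δ : ℝ, 0 < δ → m + δ ∈ Pset := by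
      intro δ hδ
      have hp0 : 1/((r 0 : ℝ)+1) < m + δ :=
        lt_of_le_of_lt (le_max_right _ _) (by linarith)
      have hK2 : ∀ k, K ≤ k → ξ₀ ≤ ((2 * r k + 2 : ℕ) : ℝ) * ((m + δ)/2) := by
        intro k hk
        rw [hKN k hk]
        have h1 : ξ₀ / ((N:ℝ)+1) ≤ m := le_max_left _ _
        have h2 : ξ₀ ≤ ((N:ℝ)+1) * m := by
          rw [div_le_iff₀ (by positivity)] at h1
          linarith
        push_cast
        nlinarith [(Nat.cast_nonneg N : (0:ℝ) ≤ (N:ℝ))]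
      obtain ⟨C, hC, hbound⟩ := mem_upper r hr ξ₀ hξ hG' (m + δ) hp0 K hK2
      exact ⟨by linarith, C, hC, hbound⟩
    have hlb : ∀ p ∈ Pset, m ≤ p := by
      rintro p ⟨hp0, C, hC, hbound⟩
      exact max_le (lower_two r hr ξ₀ hξ hG' N hN C p hC hp0 hbound)
        (lower_one r C p hC hp0 hbound)
    have hPne : Pset.Nonempty := ⟨m + 1, hmem 1 one_pos⟩
    have hinf : sInf Pset = m := by
      refine le_antisymm ?_ (le_csInf hPne hlb)
      refine le_of_forall_pos_le_add fun δ hδ => csInf_le hbdd (hmem δ hδ)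
    have hlimsup := limsup_of_plateau r N K hKN
    constructor
    · obtain ⟨hp0, C, hC, hbound⟩ := hmem 1 one_pos
      exact ⟨C, m + 1, hC, hp0, hbound⟩
    · have hcomp : (ENNReal.ofReal ξ₀ / ((N : ENNReal) + 1)).toReal = ξ₀ / ((N:ℝ)+1) := by
        rw [ENNReal.toReal_div, ENNReal.toReal_ofReal (by linarith [hξ.1] : (0:ℝ) ≤ ξ₀)]
        congr 1
      rw [sptExponent, ← hPset, hinf, hlimsup, hcomp]
  · -- unbounded case
    push_neg at hb
    have hu : ∀ B, ∃ k, B < r k := fun B => by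
      obtain ⟨k, hk⟩ := hb B
      exact ⟨k, by omega⟩
    set m : ℝ := 1 / ((r 0 : ℝ) + 1) with hm
    have hm0 : 0 < m := by positivity
    have hmem : ∀ δ : ℝ, 0 < δ → m + δ ∈ Pset := by
      intro δ hδ
      have hp0 : 1/((r 0 : ℝ)+1) < m + δ := by rw [hm] at *; linarith
      obtain ⟨k0, hk0⟩ := hu ⌈ξ₀ / (m + δ)⌉₊
      have hK2 : ∀ k, k0 ≤ k → ξ₀ ≤ ((2 * r k + 2 : ℕ) : ℝ) * ((m + δ)/2) := by
        intro k hk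
        have h1 : (⌈ξ₀ / (m + δ)⌉₊ : ℝ) ≤ (r k : ℝ) := by
          exact_mod_cast le_of_lt (lt_of_lt_of_le hk0 (hr hk))
        have h2 : ξ₀ / (m + δ) ≤ (r k : ℝ) := le_trans (Nat.le_ceil _) h1
        have h3 : ξ₀ ≤ (r k : ℝ) * (m + δ) := by
          rw [div_le_iff₀ (by linarith)] at h2
          exact h2
        push_cast
        nlinarith [(Nat.cast_nonneg (r k) : (0:ℝ) ≤ (r k:ℝ))]
      obtain ⟨C, hC, hbound⟩ := mem_upper r hr ξ₀ hξ hG' (m + δ) hp0 k0 hK2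
      exact ⟨by linarith, C, hC, hbound⟩
    have hlb : ∀ p ∈ Pset, m ≤ p := by
      rintro p ⟨hp0, C, hC, hbound⟩
      exact lower_one r C p hC hp0 hbound
    have hPne : Pset.Nonempty := ⟨m + 1, hmem 1 one_pos⟩
    have hinf : sInf Pset = m := by
      refine le_antisymm ?_ (le_csInf hPne hlb)
      refine le_of_forall_pos_le_add fun δ hδ => csInf_le hbdd (hmem δ hδ)
    have hlimsup := limsup_of_unbounded r hr hu
    constructor
    · obtain ⟨hp0, C, hC, hbound⟩ := hmem 1 one_pos
      exact ⟨C, m + 1, hC, hp0, hbound⟩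
    · have h1 : ((⊤ : ENNReal) + 1) = ⊤ := by simp
      rw [sptExponent, ← hPset, hinf, hlimsup, h1, ENNReal.div_top]
      simp only [ENNReal.toReal_zero]
      rw [max_eq_right (by positivity)]
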